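/- Let p, m, q ∈ ℝ and let D be the connection on U = {(x¹,x²) ∈ ℝ² : x¹ > 0} whose only possibly nonzero Christoffel symbols are Γ¹_{11} = p/x¹, Γ²_{11} = m/x¹ and Γ²_{12} = Γ²_{21} = q/x¹ (a Type B connection of class (i)). Then the Ricci tensor of D is symmetric with only possibly nonzero component ρ_{11}(x¹,x²) = q(1 + p − q)/(x¹)², and it is recurrent with recurrence one-form ω = −(2/x¹)(1 + p) dx¹: for all i, j ∈ {1,2}, (D_{∂_1}ρ)_{ij} = −(2/x¹)(1 + p) ρ_{ij} and (D_{∂_2}ρ)_{ij} = 0, where (D_{∂_k}ρ)_{ij} = ∂_k ρ_{ij} − Σ_l Γ^l_{ki} ρ_{lj} − Σ_l Γ^l_{kj} ρ_{il}. -/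

import Mathlib

noncomputable section

/-- Points of the affine surface (local coordinates `(x¹,x²)`). -/
abbrev Pt2 := Fin 2 → ℝ

/-- Partial derivative `∂_{x^i}`. -/
def pd2 (i : Fin 2) (f : Pt2 → ℝ) (p : Pt2) : ℝ :=
  fderiv ℝ f p (Pi.single i 1)

/-- The Ricci tensor `ρ_{ij}` of the affine connection with Christoffel symbols `Γ^k_{ij}`:
`ρ_{ij} = Σ_k ∂_{x^k}Γ^k_{ij} − ∂_{x^i}(Σ_k Γ^k_{kj}) + Σ_{k,l}(Γ^k_{kl}Γ^l_{ij} − Γ^k_{il}Γ^l_{kj})`. -/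
def ricciD (Γ : Fin 2 → Fin 2 → Fin 2 → Pt2 → ℝ) (i j : Fin 2) (p : Pt2) : ℝ :=
  (∑ k : Fin 2, pd2 k (Γ k i j) p) - pd2 i (fun q => ∑ k : Fin 2, Γ k k j q) p
    + ∑ k : Fin 2, ∑ l : Fin 2, (Γ k k l p * Γ l i j p - Γ k i l p * Γ l k j p)

/-- The symmetric part `ρ^{sym}_{ij} = ½(ρ_{ij}+ρ_{ji})` of the Ricci tensor. -/
def ricciDSym (Γ : Fin 2 → Fin 2 → Fin 2 → Pt2 → ℝ) (i j : Fin 2) (p : Pt2) : ℝ :=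
  (ricciD Γ i j p + ricciD Γ j i p) / 2

/-- The affine Hessian `Hes_h(∂_i,∂_j) = ∂_i∂_j h − Σ_k Γ^k_{ij} ∂_k h`. -/
def hessD (Γ : Fin 2 → Fin 2 → Fin 2 → Pt2 → ℝ) (h : Pt2 → ℝ) (i j : Fin 2) (p : Pt2) : ℝ :=
  pd2 i (pd2 j h) p - ∑ k : Fin 2, Γ k i j p * pd2 k h p

/-- The covariant derivative of the Ricci tensor:
`(D_{∂_i}ρ)_{jk} = ∂_i ρ_{jk} − Σ_l Γ^l_{ij} ρ_{lk} − Σ_l Γ^l_{ik} ρ_{jl}`. -/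
def covRicciD (Γ : Fin 2 → Fin 2 → Fin 2 → Pt2 → ℝ) (i j k : Fin 2) (p : Pt2) : ℝ :=
  pd2 i (fun q => ricciD Γ j k q) p - (∑ l : Fin 2, Γ l i j p * ricciD Γ l k p)
    - ∑ l : Fin 2, Γ l i k p * ricciD Γ j l p

/-- The Type B class (i) connection with `Γ¹_{11} = p/x¹`, `Γ²_{11} = m/x¹`,
`Γ²_{12} = Γ²_{21} = q/x¹` and all other Christoffel symbols zero. -/
def ΓB1 (P m q : ℝ) : Fin 2 → Fin 2 → Fin 2 → Pt2 → ℝ := fun k i j x =>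
  if k = 0 ∧ i = 0 ∧ j = 0 then P / x 0
  else if k = 1 ∧ i = 0 ∧ j = 0 then m / x 0
  else if k = 1 ∧ ((i = 0 ∧ j = 1) ∨ (i = 1 ∧ j = 0)) then q / x 0
  else 0

def L : Pt2 →L[ℝ] ℝ := ContinuousLinearMap.proj 0
lemma hL (x : Pt2) : HasFDerivAt (fun y : Pt2 => y 0) L x := L.hasFDerivAt
lemma pd2_const (c : ℝ) (k : Fin 2) (x : Pt2) : pd2 k (fun _ => c) x = 0 := by
  simp [pd2]
lemma pd2_div1 (c : ℝ) (k : Fin 2) (x : Pt2) (hx : x 0 ≠ 0) :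
    pd2 k (fun y => c / y 0) x = if k = 0 then -c / (x 0)^2 else 0 := by
  have hg : HasDerivAt (fun t : ℝ => c / t) ((0 * x 0 - c * 1) / (x 0)^2) (x 0) :=
    (hasDerivAt_const (x 0) c).div (hasDerivAt_id (x 0)) hx
  have h : HasFDerivAt (fun y : Pt2 => c / y 0)
      (((0 * x 0 - c * 1) / (x 0)^2) • L) x := hg.comp_hasFDerivAt x (hL x)
  rw [pd2, h.fderiv]
  fin_cases k <;> simp [L, ContinuousLinearMap.proj, Pi.single_apply]
lemma pd2_div2 (c : ℝ) (k : Fin 2) (x : Pt2) (hx : x 0 ≠ 0) :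
    pd2 k (fun y => c / (y 0)^2) x = if k = 0 then -2*c / (x 0)^3 else 0 := by
  have hp : HasDerivAt (fun t : ℝ => t^2) ((2:ℕ) * (x 0)^1 * 1) (x 0) :=
    (hasDerivAt_id (x 0)).pow 2
  have hg : HasDerivAt (fun t : ℝ => c / t^2)
      ((0 * (x 0)^2 - c * ((2:ℕ) * (x 0)^1 * 1)) / ((x 0)^2)^2) (x 0) :=
    (hasDerivAt_const (x 0) c).div hp (pow_ne_zero 2 hx)
  have h : HasFDerivAt (fun y : Pt2 => c / (y 0)^2)
      (((0 * (x 0)^2 - c * ((2:ℕ) * (x 0)^1 * 1)) / ((x 0)^2)^2) • L) x :=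
    by have := hg.comp_hasFDerivAt x (hL x); exact this
  rw [pd2, h.fderiv]
  fin_cases k <;> simp [L, ContinuousLinearMap.proj, Pi.single_apply] <;>
    field_simp <;> ring

lemma G000 (P m q : ℝ) : ΓB1 P m q 0 0 0 = fun y => P / y 0 := by funext y; simp [ΓB1]
lemma G100 (P m q : ℝ) : ΓB1 P m q 1 0 0 = fun y => m / y 0 := by funext y; simp [ΓB1]
lemma G101 (P m q : ℝ) : ΓB1 P m q 1 0 1 = fun y => q / y 0 := by funext y; simp [ΓB1]
lemma G110 (P m q : ℝ) : ΓB1 P m q 1 1 0 = fun y => q / y 0 := by funext y; simp [ΓB1]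
lemma G001 (P m q : ℝ) : ΓB1 P m q 0 0 1 = fun _ => 0 := by funext y; simp [ΓB1]
lemma G010 (P m q : ℝ) : ΓB1 P m q 0 1 0 = fun _ => 0 := by funext y; simp [ΓB1]
lemma G011 (P m q : ℝ) : ΓB1 P m q 0 1 1 = fun _ => 0 := by funext y; simp [ΓB1]
lemma G111 (P m q : ℝ) : ΓB1 P m q 1 1 1 = fun _ => 0 := by funext y; simp [ΓB1]
lemma trace0 (P m q : ℝ) :
    (fun y => ∑ k : Fin 2, ΓB1 P m q k k 0 y) = fun y => (P + q) / y 0 := by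
  funext y; simp [Fin.sum_univ_two, ΓB1, ← add_div]
lemma trace1 (P m q : ℝ) :
    (fun y => ∑ k : Fin 2, ΓB1 P m q k k 1 y) = fun _ => (0:ℝ) := by
  funext y; simp [Fin.sum_univ_two, ΓB1]

lemma ricci00 (P m q : ℝ) (x : Pt2) (hx : x 0 ≠ 0) :
    ricciD (ΓB1 P m q) 0 0 x = q * (1 + P - q) / (x 0)^2 := by
  unfold ricciD
  rw [trace0 P m q]
  simp only [Fin.sum_univ_two, G000, G100, G101, G110, G001, G010, G011, G111]
  simp only [pd2_div1 _ _ _ hx, pd2_const]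
  simp [ΓB1]
  field_simp
  ring
lemma ricci01 (P m q : ℝ) (x : Pt2) (hx : x 0 ≠ 0) :
    ricciD (ΓB1 P m q) 0 1 x = 0 := by
  unfold ricciD
  rw [trace1 P m q]
  simp only [Fin.sum_univ_two, G000, G100, G101, G110, G001, G010, G011, G111]
  simp only [pd2_div1 _ _ _ hx, pd2_const]
  simp [ΓB1]

lemma ricci10 (P m q : ℝ) (x : Pt2) (hx : x 0 ≠ 0) :
    ricciD (ΓB1 P m q) 1 0 x = 0 := by
  unfold ricciD
  rw [trace0 P m q]
  simp only [Fin.sum_univ_two, G000, G100, G101, G110, G001, G010, G011, G111]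
  simp only [pd2_div1 _ _ _ hx, pd2_const]
  simp [ΓB1]

lemma ricci11 (P m q : ℝ) (x : Pt2) (hx : x 0 ≠ 0) :
    ricciD (ΓB1 P m q) 1 1 x = 0 := by
  unfold ricciD
  rw [trace1 P m q]
  simp only [Fin.sum_univ_two, G000, G100, G101, G110, G001, G010, G011, G111]
  simp only [pd2_div1 _ _ _ hx, pd2_const]
  simp [ΓB1]


lemma ricci_eq (P m q : ℝ) (i j : Fin 2) (x : Pt2) (hx : x 0 ≠ 0) :
    ricciD (ΓB1 P m q) i j x
      = (if i = 0 ∧ j = 0 then q * (1 + P - q) else 0) / (x 0)^2 := by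
  fin_cases i <;> fin_cases j <;>
    simp [ricci00 P m q x hx, ricci01 P m q x hx, ricci10 P m q x hx, ricci11 P m q x hx]

lemma ricci_ev (P m q : ℝ) (i j : Fin 2) (x : Pt2) (hx : 0 < x 0) :
    (fun y => ricciD (ΓB1 P m q) i j y) =ᶠ[nhds x]
      (fun y => (if i = 0 ∧ j = 0 then q * (1 + P - q) else 0) / (y 0)^2) := by
  have hop : IsOpen {y : Pt2 | 0 < y 0} := isOpen_lt continuous_const (continuous_apply 0)
  filter_upwards [hop.mem_nhds hx] with y hy
  exact ricci_eq P m q i j y (ne_of_gt hy)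

lemma pd2_ricci (P m q : ℝ) (k i j : Fin 2) (x : Pt2) (hx : 0 < x 0) :
    pd2 k (fun y => ricciD (ΓB1 P m q) i j y) x
      = if k = 0 then -2*(if i = 0 ∧ j = 0 then q * (1 + P - q) else 0) / (x 0)^3 else 0 := by
  have h := pd2_div2 (if i = 0 ∧ j = 0 then q * (1 + P - q) else 0) k x (ne_of_gt hx)
  rw [pd2] at h ⊢
  rw [(ricci_ev P m q i j x hx).fderiv_eq]
  exact h

/-- The Ricci tensor of the Type B class (i) connection is symmetric with
only possibly nonzero component `ρ_{11} = q(1+p−q)/(x¹)²`, and it is recurrent with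
recurrence one-form `ω = −(2/x¹)(1+p) dx¹`. -/
theorem stmt10 (P m q : ℝ) :
    ∀ x : Pt2, 0 < x 0 →
      (ricciD (ΓB1 P m q) 0 0 x = q * (1 + P - q) / (x 0) ^ 2) ∧
      (∀ i j : Fin 2, ¬(i = 0 ∧ j = 0) → ricciD (ΓB1 P m q) i j x = 0) ∧
      (∀ i j : Fin 2, covRicciD (ΓB1 P m q) 0 i j x
          = -(2 / x 0) * (1 + P) * ricciD (ΓB1 P m q) i j x) ∧
      (∀ i j : Fin 2, covRicciD (ΓB1 P m q) 1 i j x = 0) := by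
  intro x hx
  have hx' : x 0 ≠ 0 := ne_of_gt hx
  refine ⟨ricci00 P m q x hx', ?_, ?_, ?_⟩
  · intro i j h
    rw [ricci_eq P m q i j x hx', if_neg h, zero_div]
  · intro i j
    fin_cases i <;> fin_cases j <;>
      simp [covRicciD, Fin.sum_univ_two, pd2_ricci P m q, ricci_eq P m q, hx, hx', ΓB1] <;>
      field_simp <;> ring
  · intro i j
    fin_cases i <;> fin_cases j <;>
      simp [covRicciD, Fin.sum_univ_two, pd2_ricci P m q, ricci_eq P m q, hx, hx', ΓB1]


end
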